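/- For every ε > 0, the set U_ε = {x ∈ (0,1) : x irrational and a_n > n·(log n)^{1+ε} for only finitely many n} has full Lebesgue measure in (0,1), where a_n are the partial quotients of x. -/

import Mathlib

open Filter MeasureTheory Real Topology

/-- The Gauss map `x ↦ {1/x}`. -/
noncomputable def gaussMap (x : ℝ) : ℝ := Int.fract x⁻¹

/-- `partQuot x n` is the `n`-th partial quotient `aₙ` of the regular continued fraction
expansion `x = [a₁, a₂, …]` of `x ∈ (0,1)` (meaningful for `n ≥ 1`). -/
noncomputable def partQuot (x : ℝ) (n : ℕ) : ℕ := (⌊(gaussMap^[n - 1] x)⁻¹⌋).toNat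

/-- `cfQ x n` is the denominator `qₙ` of the `n`-th continued fraction convergent
`pₙ/qₙ = [a₁, …, aₙ]` of `x`, given by `q₀ = 1`, `q₁ = a₁`, `qₙ = aₙ qₙ₋₁ + qₙ₋₂`. -/
noncomputable def cfQ (x : ℝ) : ℕ → ℤ
  | 0 => 1
  | 1 => partQuot x 1
  | (n + 2) => partQuot x (n + 2) * cfQ x (n + 1) + cfQ x n

/-- `cfP x n` is the numerator `pₙ` of the `n`-th continued fraction convergent of `x`,
given by `p₀ = 0`, `p₁ = 1`, `pₙ = aₙ pₙ₋₁ + pₙ₋₂`. -/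
noncomputable def cfP (x : ℝ) : ℕ → ℤ
  | 0 => 0
  | 1 => 1
  | (n + 2) => partQuot x (n + 2) * cfP x (n + 1) + cfP x n


noncomputable def gphi (k : ℕ) (y : ℝ) : ℝ := ((k : ℝ) + 1 + y)⁻¹

lemma gphi_pos_den {k : ℕ} {y : ℝ} (hy : 0 < y) : (0:ℝ) < (k:ℝ) + 1 + y := by positivity

lemma gphi_mem {k : ℕ} {y : ℝ} (hy : y ∈ Set.Ioo (0:ℝ) 1) :
    gphi k y ∈ Set.Ioo (((k:ℝ) + 2)⁻¹) (((k:ℝ) + 1)⁻¹) := by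
  obtain ⟨h0, h1⟩ := hy
  constructor
  · apply inv_strictAnti₀ (gphi_pos_den h0)
    linarith
  · apply inv_strictAnti₀ (by positivity)
    linarith

lemma gphi_mem_Ioo01 {k : ℕ} {y : ℝ} (hy : y ∈ Set.Ioo (0:ℝ) 1) :
    gphi k y ∈ Set.Ioo (0:ℝ) 1 := by
  obtain ⟨h1, h2⟩ := gphi_mem (k := k) hy
  refine ⟨lt_trans (by positivity) h1, lt_of_lt_of_le h2 ?_⟩
  rw [inv_le_one_iff₀]; right; linarith

lemma branch_decomp {B : Set ℝ} (hB : B ⊆ Set.Ioo 0 1) :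
    Set.Ioo (0:ℝ) 1 ∩ gaussMap ⁻¹' B = ⋃ k : ℕ, gphi k '' B := by
  ext x
  simp only [Set.mem_inter_iff, Set.mem_preimage, Set.mem_iUnion, Set.mem_image]
  constructor
  · rintro ⟨⟨hx0, hx1⟩, hxB⟩
    have hinv : 1 < x⁻¹ := (one_lt_inv₀ hx0).2 hx1
    have hm : 1 ≤ ⌊x⁻¹⌋ := by
      rw [Int.le_floor]; exact_mod_cast hinv.le
    refine ⟨(⌊x⁻¹⌋ - 1).toNat, Int.fract x⁻¹, hxB, ?_⟩
    have hcast : ((((⌊x⁻¹⌋ - 1).toNat : ℕ) : ℝ)) = (⌊x⁻¹⌋ : ℝ) - 1 := by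
      have h2 : ((⌊x⁻¹⌋ - 1).toNat : ℤ) = ⌊x⁻¹⌋ - 1 := Int.toNat_of_nonneg (by omega)
      exact_mod_cast congrArg (Int.cast : ℤ → ℝ) h2
    have : gphi (⌊x⁻¹⌋ - 1).toNat (Int.fract x⁻¹)
        = ((⌊x⁻¹⌋ : ℝ) + Int.fract x⁻¹)⁻¹ := by
      unfold gphi; rw [hcast]; ring_nf
    rw [this, Int.fract]
    rw [show (⌊x⁻¹⌋ : ℝ) + (x⁻¹ - ⌊x⁻¹⌋) = x⁻¹ by ring, inv_inv]
  · rintro ⟨k, y, hyB, rfl⟩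
    have hy := hB hyB
    have hmem := gphi_mem_Ioo01 (k := k) hy
    refine ⟨hmem, ?_⟩
    have hne : ((k:ℝ) + 1 + y) ≠ 0 := (gphi_pos_den hy.1).ne'
    have : gaussMap (gphi k y) = Int.fract ((k:ℝ) + 1 + y) := by
      unfold gaussMap gphi; rw [inv_inv]
    rw [this, show ((k:ℝ) + 1 + y) = ((k + 1 : ℤ) : ℝ) + y by push_cast; ring,
      Int.fract_intCast_add, Int.fract_eq_self.2 ⟨hy.1.le, hy.2⟩]
    exact hyB

section


lemma gphi_hasDeriv {k : ℕ} {y : ℝ} (hy : 0 < y) :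
    HasDerivAt (gphi k) (-((((k:ℝ) + 1 + y) ^ 2)⁻¹)) y := by
  have h : HasDerivAt (fun y : ℝ => (k : ℝ) + 1 + y) 1 y :=
    (hasDerivAt_id y).const_add _
  have := h.inv (by positivity)
  simp only [neg_div, one_div] at this
  exact this

lemma gphi_injOn (k : ℕ) : Set.InjOn (gphi k) (Set.Ioo (0:ℝ) 1) := by
  intro a ha b hb h
  have := inv_injective h
  linarith [this]

end

lemma lintegral_gphi_image {B : Set ℝ} (hBm : MeasurableSet B) (hB : B ⊆ Set.Ioo 0 1)
    (k : ℕ) (f : ℝ → ENNReal) :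
    ∫⁻ x in gphi k '' B, f x
      = ∫⁻ y in B, ENNReal.ofReal ((((k:ℝ) + 1 + y) ^ 2)⁻¹) * f (gphi k y) := by
  have hder : ∀ y ∈ B, HasFDerivWithinAt (gphi k)
      ((1 : ℝ →L[ℝ] ℝ).smulRight (-((((k:ℝ) + 1 + y) ^ 2)⁻¹))) B y := by
    intro y hy
    exact ((gphi_hasDeriv (hB hy).1).hasFDerivAt).hasFDerivWithinAt
  have hinj : Set.InjOn (gphi k) B := (gphi_injOn k).mono hB
  rw [lintegral_image_eq_lintegral_abs_det_fderiv_mul volume hBm hder hinj f]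
  refine setLIntegral_congr_fun hBm (fun y hy => ?_)
  congr 1
  rw [ContinuousLinearMap.det_smulRight, ContinuousLinearMap.one_apply, one_mul, abs_neg, abs_of_pos (by have := (hB hy).1; positivity)]

lemma gphi_image_subset {B : Set ℝ} (hB : B ⊆ Set.Ioo 0 1) (k : ℕ) :
    gphi k '' B ⊆ Set.Ioo (((k:ℝ) + 2)⁻¹) (((k:ℝ) + 1)⁻¹) := by
  rintro _ ⟨y, hy, rfl⟩
  exact gphi_mem (hB hy)

lemma gphi_image_measurable {B : Set ℝ} (hBm : MeasurableSet B) (hB : B ⊆ Set.Ioo 0 1)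
    (k : ℕ) : MeasurableSet (gphi k '' B) := by
  have hder : ∀ y ∈ B, HasFDerivWithinAt (gphi k)
      ((1 : ℝ →L[ℝ] ℝ).smulRight (-((((k:ℝ) + 1 + y) ^ 2)⁻¹))) B y := fun y hy =>
    ((gphi_hasDeriv (hB hy).1).hasFDerivAt).hasFDerivWithinAt
  exact measurable_image_of_fderivWithin hBm hder ((gphi_injOn k).mono hB)

lemma gphi_image_disjoint {B : Set ℝ} (hB : B ⊆ Set.Ioo 0 1) :
    Pairwise (Function.onFun Disjoint fun k : ℕ => gphi k '' B) := by
  have key : ∀ (i j : ℕ), i < j → Disjoint (gphi i '' B) (gphi j '' B) := by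
    intro i j hij
    refine Set.disjoint_left.2 fun x hxi hxj => ?_
    have h1 := (gphi_image_subset hB i hxi).1
    have h2 := (gphi_image_subset hB j hxj).2
    have : ((j:ℝ) + 1)⁻¹ ≤ ((i:ℝ) + 2)⁻¹ := by
      apply inv_anti₀ (by positivity)
      have : (i:ℝ) + 1 ≤ j := by exact_mod_cast hij
      linarith
    linarith
  intro i j hij
  rcases hij.lt_or_gt with h | h
  · exact key i j h
  · exact (key j i h).symm

lemma step_lemma {B : Set ℝ} (hBm : MeasurableSet B) (hB : B ⊆ Set.Ioo 0 1)
    (f : ℝ → ENNReal) :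
    ∫⁻ x in Set.Ioo (0:ℝ) 1 ∩ gaussMap ⁻¹' B, f x
      = ∑' k : ℕ, ∫⁻ y in B, ENNReal.ofReal ((((k:ℝ) + 1 + y) ^ 2)⁻¹) * f (gphi k y) := by
  rw [branch_decomp hB,
    lintegral_iUnion (fun k => gphi_image_measurable hBm hB k) (gphi_image_disjoint hB)]
  exact tsum_congr fun k => lintegral_gphi_image hBm hB k f

noncomputable def gdens : ℕ → ℝ → ENNReal
  | 0 => fun _ => 1
  | (n+1) => fun y => ∑' k : ℕ, ENNReal.ofReal ((((k:ℝ) + 1 + y) ^ 2)⁻¹) * gdens n (gphi k y)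

lemma gdens_measurable : ∀ n, Measurable (gdens n)
  | 0 => measurable_const
  | (n+1) => by
    apply Measurable.ennreal_tsum
    intro k
    apply Measurable.mul
    · apply Measurable.ennreal_ofReal
      exact ((measurable_const.add measurable_id).pow_const 2).inv
    · exact (gdens_measurable n).comp ((measurable_const.add measurable_id).inv)

lemma tele_hasSum {x : ℝ} (hx : 0 ≤ x) :
    HasSum (fun k : ℕ => (((k:ℝ) + 1 + x) * ((k:ℝ) + 2 + x))⁻¹) ((1 + x)⁻¹) := by
  have hpos : ∀ k : ℕ, (0:ℝ) < (k:ℝ) + 1 + x := fun k => by positivity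
  have hterm : ∀ k : ℕ, (((k:ℝ) + 1 + x) * ((k:ℝ) + 2 + x))⁻¹
      = ((k:ℝ) + 1 + x)⁻¹ - ((k:ℝ) + 2 + x)⁻¹ := by
    intro k
    have h1 := hpos k
    have h2 : (0:ℝ) < (k:ℝ) + 2 + x := by positivity
    field_simp
    ring
  rw [(hasSum_iff_tendsto_nat_of_nonneg (fun k => by positivity) _)]
  have hsum : ∀ n : ℕ, ∑ k ∈ Finset.range n, (((k:ℝ) + 1 + x) * ((k:ℝ) + 2 + x))⁻¹
      = (1 + x)⁻¹ - ((n:ℝ) + 1 + x)⁻¹ := by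
    intro n
    have := Finset.sum_range_sub' (fun k : ℕ => ((k:ℝ) + 1 + x)⁻¹) n
    simp only [Nat.cast_zero, zero_add] at this
    rw [← this]
    apply Finset.sum_congr rfl
    intro k _
    rw [hterm k]
    congr 2
    push_cast; ring
  simp only [hsum]
  have : Tendsto (fun n : ℕ => ((n:ℝ) + 1 + x)⁻¹) atTop (nhds 0) := by
    apply Tendsto.inv_tendsto_atTop
    apply tendsto_atTop_add_const_right
    apply tendsto_atTop_add_const_right
    exact tendsto_natCast_atTop_atTop
  simpa using tendsto_const_nhds.sub this

lemma gdens_le : ∀ n, ∀ x ∈ Set.Icc (0:ℝ) 1, gdens n x ≤ ENNReal.ofReal (2 * (1 + x)⁻¹)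
  | 0 => by
    intro x hx
    have h : (1:ℝ) ≤ 2 / (1 + x) := (one_le_div (by linarith [hx.1])).2 (by linarith [hx.2])
    simp only [gdens]
    rw [show (1:ENNReal) = ENNReal.ofReal 1 by simp]
    exact ENNReal.ofReal_le_ofReal (by simpa [div_eq_mul_inv] using h)
  | (n+1) => by
    intro x hx
    have hx0 := hx.1
    have hc : ∀ k : ℕ, (0:ℝ) < (k:ℝ) + 1 + x := fun k => by positivity
    have hmem : ∀ k : ℕ, gphi k x ∈ Set.Icc (0:ℝ) 1 := by
      intro k
      constructor
      · exact le_of_lt (by unfold gphi; positivity)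
      · unfold gphi
        rw [inv_le_one_iff₀]
        right; linarith [hc k]
    simp only [gdens]
    calc ∑' k : ℕ, ENNReal.ofReal ((((k:ℝ) + 1 + x) ^ 2)⁻¹) * gdens n (gphi k x)
        ≤ ∑' k : ℕ, ENNReal.ofReal (2 * (((k:ℝ) + 1 + x) * ((k:ℝ) + 2 + x))⁻¹) := by
          apply ENNReal.tsum_le_tsum
          intro k
          calc ENNReal.ofReal ((((k:ℝ) + 1 + x) ^ 2)⁻¹) * gdens n (gphi k x)
              ≤ ENNReal.ofReal ((((k:ℝ) + 1 + x) ^ 2)⁻¹)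
                  * ENNReal.ofReal (2 * (1 + gphi k x)⁻¹) :=
                mul_le_mul_right (gdens_le n _ (hmem k)) _
            _ = ENNReal.ofReal ((((k:ℝ) + 1 + x) ^ 2)⁻¹ * (2 * (1 + gphi k x)⁻¹)) :=
                (ENNReal.ofReal_mul (by positivity)).symm
            _ = ENNReal.ofReal (2 * (((k:ℝ) + 1 + x) * ((k:ℝ) + 2 + x))⁻¹) := by
                congr 1
                have h1 := hc k
                have h2 : (0:ℝ) < (k:ℝ) + 2 + x := by positivity
                have h3 : (0:ℝ) < 1 + gphi k x := by
                  have := (hmem k).1; linarith [(hmem k).1,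
                    show (0:ℝ) < gphi k x from by unfold gphi; positivity]
                unfold gphi
                field_simp
                ring
      _ = ENNReal.ofReal (2 * (1 + x)⁻¹) := by
          rw [← ENNReal.ofReal_tsum_of_nonneg (fun k => by positivity)
            ((tele_hasSum hx0).summable.mul_left 2)]
          congr 1
          exact ((tele_hasSum hx0).mul_left 2).tsum_eq

lemma gaussMap_measurable : Measurable gaussMap :=
  measurable_fract.comp measurable_inv

lemma gaussMap_zero : gaussMap 0 = 0 := by
  unfold gaussMap; simp

lemma gauss_iter_mem {x : ℝ} (hx : x ∈ Set.Ioo (0:ℝ) 1) (n : ℕ) {A : Set ℝ}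
    (hA : A ⊆ Set.Ioo 0 1) (h : gaussMap (gaussMap^[n] x) ∈ A) :
    gaussMap^[n] x ∈ Set.Ioo (0:ℝ) 1 := by
  cases n with
  | zero => simpa using hx
  | succ m =>
    rw [Function.iterate_succ_apply']
    set y := gaussMap^[m] x
    constructor
    · rcases lt_or_eq_of_le (Int.fract_nonneg (y⁻¹)) with h' | h'
      · exact h'
      · exfalso
        rw [Function.iterate_succ_apply'] at h
        have : gaussMap y = 0 := h'.symm
        rw [this, gaussMap_zero] at h
        exact absurd (hA h).1 (lt_irrefl 0)
    · exact Int.fract_lt_one _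

lemma vol_eq : ∀ n, ∀ A : Set ℝ, MeasurableSet A → A ⊆ Set.Ioo 0 1 →
    volume (Set.Ioo (0:ℝ) 1 ∩ gaussMap^[n] ⁻¹' A) = ∫⁻ y in A, gdens n y
  | 0 => by
    intro A hAm hA
    simp only [Function.iterate_zero, Set.preimage_id, Set.preimage_id', gdens,
      Set.inter_eq_self_of_subset_right hA]
    rw [setLIntegral_one]
  | (n+1) => by
    intro A hAm hA
    set B := Set.Ioo (0:ℝ) 1 ∩ gaussMap ⁻¹' A with hBdef
    have hBm : MeasurableSet B := measurableSet_Ioo.inter (gaussMap_measurable hAm)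
    have hBsub : B ⊆ Set.Ioo 0 1 := Set.inter_subset_left
    have hset : Set.Ioo (0:ℝ) 1 ∩ gaussMap^[n+1] ⁻¹' A
        = Set.Ioo (0:ℝ) 1 ∩ gaussMap^[n] ⁻¹' B := by
      ext x
      simp only [Set.mem_inter_iff, Set.mem_preimage, hBdef, Function.iterate_succ_apply']
      constructor
      · rintro ⟨hx, hA'⟩
        exact ⟨hx, gauss_iter_mem hx n hA hA', hA'⟩
      · rintro ⟨hx, _, hA'⟩
        exact ⟨hx, hA'⟩
    rw [hset, vol_eq n B hBm hBsub, step_lemma hAm hA (gdens n)]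
    have : ∀ k : ℕ, AEMeasurable
        (fun y => ENNReal.ofReal ((((k:ℝ) + 1 + y) ^ 2)⁻¹) * gdens n (gphi k y))
        (volume.restrict A) := by
      intro k
      apply Measurable.aemeasurable
      apply Measurable.mul
      · exact Measurable.ennreal_ofReal (((measurable_const.add measurable_id).pow_const 2).inv)
      · exact (gdens_measurable n).comp ((measurable_const.add measurable_id).inv)
    rw [← lintegral_tsum this]
    rfl

lemma vol_le (n : ℕ) (A : Set ℝ) (hAm : MeasurableSet A) (hA : A ⊆ Set.Ioo 0 1) :
    volume (Set.Ioo (0:ℝ) 1 ∩ gaussMap^[n] ⁻¹' A) ≤ 2 * volume A := by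
  rw [vol_eq n A hAm hA]
  calc ∫⁻ y in A, gdens n y ≤ ∫⁻ _ in A, (2:ENNReal) := by
        apply setLIntegral_mono measurable_const
        intro y hy
        refine le_trans (gdens_le n y ⟨(hA hy).1.le, (hA hy).2.le⟩) ?_
        rw [show (2:ENNReal) = ENNReal.ofReal 2 by norm_num]
        apply ENNReal.ofReal_le_ofReal
        have h1 : (0:ℝ) < 1 + y := by linarith [(hA hy).1]
        have : (1 + y)⁻¹ ≤ 1 := by
          rw [inv_le_one_iff₀]; right; linarith [(hA hy).1]
        nlinarith
    _ = 2 * volume A := by rw [setLIntegral_const]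



section
variable {ε : ℝ}

lemma log_ge_one {x : ℝ} (hx : 3 ≤ x) : 1 ≤ Real.log x := by
  have h9 := Real.exp_one_lt_d9
  have : Real.exp 1 ≤ 3 := by linarith
  calc (1:ℝ) = Real.log (Real.exp 1) := (Real.log_exp 1).symm
    _ ≤ Real.log x := Real.log_le_log (Real.exp_pos 1) (le_trans this hx)

-- key pointwise comparison, for real x ≥ 3 playing the role of n
lemma key_compare (hε : 0 < ε) (hε1 : ε ≤ 1) {x : ℝ} (hx : 3 ≤ x) :
    2 * (x * Real.log x ^ (1 + ε))⁻¹
      ≤ (8 / ε) * (Real.log x ^ (-ε) - Real.log (x + 1) ^ (-ε)) := by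
  have hx0 : (0:ℝ) < x := by linarith
  set u := Real.log x with hu_def
  set v := Real.log (x + 1) with hv_def
  have hu : 1 ≤ u := log_ge_one hx
  have hu0 : 0 < u := by linarith
  have huv : u ≤ v := Real.log_le_log hx0 (by linarith)
  have hv0 : 0 < v := by linarith
  have hv2 : v ≤ 2 * u := by
    have h1 : x + 1 ≤ x ^ 2 := by nlinarith
    have := Real.log_le_log (by linarith) h1
    rwa [Real.log_pow, Nat.cast_ofNat, ← hu_def] at this  -- log (x^2) = 2 * log x
  have hvu : 1 / (2 * x) ≤ v - u := by
    have hlog := Real.log_le_sub_one_of_pos (show (0:ℝ) < x / (x+1) by positivity)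
    rw [Real.log_div (by positivity) (by positivity)] at hlog
    rw [hu_def, hv_def]
    have : x / (x + 1) - 1 = -(1 / (x+1)) := by field_simp; ring
    rw [this] at hlog
    have h2 : 1 / (2 * x) ≤ 1 / (x + 1) := by
      apply one_div_le_one_div_of_le (by positivity)
      linarith
    linarith
  set P := u ^ ε with hP_def
  set Q := v ^ ε with hQ_def
  have hP1 : 1 ≤ P := Real.one_le_rpow hu hε.le
  have hP0 : 0 < P := by linarith
  have hQ0 : 0 < Q := Real.rpow_pos_of_pos hv0 ε
  have hPQ : P ≤ Q := Real.rpow_le_rpow hu0.le huv hε.le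
  have hdiv : (u / v) ^ ε = P / Q := Real.div_rpow hu0.le hv0.le ε
  have amgm : (u / v) ^ ε * 1 ^ (1 - ε) ≤ ε * (u / v) + (1 - ε) * 1 :=
    Real.geom_mean_le_arith_mean2_weighted hε.le (by linarith) (by positivity)
      zero_le_one (by ring)
  rw [Real.one_rpow, mul_one, mul_one, hdiv] at amgm
  have h5 : ε * ((v - u) / v) ≤ 1 - P / Q := by
    have : (v - u) / v = 1 - u / v := by field_simp
    rw [this]
    nlinarith
  have h6 : (1 / (2 * x)) / (2 * u) ≤ (v - u) / v :=
    div_le_div₀ (by linarith) hvu hv0 (by linarith)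
  have h7 : P⁻¹ - Q⁻¹ = P⁻¹ * (1 - P / Q) := by field_simp
  have h8 : P⁻¹ * (ε * ((1 / (2 * x)) / (2 * u))) ≤ P⁻¹ - Q⁻¹ := by
    rw [h7]
    apply mul_le_mul_of_nonneg_left _ (by positivity)
    calc ε * ((1 / (2 * x)) / (2 * u)) ≤ ε * ((v - u) / v) :=
          mul_le_mul_of_nonneg_left h6 hε.le
      _ ≤ 1 - P / Q := h5
  have hrw1 : Real.log x ^ (-ε) = P⁻¹ := by
    rw [← hu_def, Real.rpow_neg hu0.le, hP_def]
  have hrw2 : Real.log (x + 1) ^ (-ε) = Q⁻¹ := by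
    rw [← hv_def, Real.rpow_neg hv0.le, hQ_def]
  have hrw3 : Real.log x ^ (1 + ε) = u * P := by
    rw [← hu_def, Real.rpow_add hu0, Real.rpow_one, hP_def]
  rw [hrw1, hrw2, hrw3]
  calc 2 * (x * (u * P))⁻¹ = (8 / ε) * (P⁻¹ * (ε * ((1 / (2 * x)) / (2 * u)))) := by
        field_simp
        ring
    _ ≤ (8 / ε) * (P⁻¹ - Q⁻¹) := by
        apply mul_le_mul_of_nonneg_left h8 (by positivity)

lemma term_pos (e : ℝ) (m : ℕ) : 0 < ((m:ℝ) + 3) * Real.log ((m:ℝ) + 3) ^ (1 + e) := by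
  have h := log_ge_one (x := (m:ℝ) + 3) (by linarith [Nat.cast_nonneg (α := ℝ) m])
  exact mul_pos (by positivity) (Real.rpow_pos_of_pos (by linarith) _)

lemma summable_tele_aux (hε : 0 < ε) (hε1 : ε ≤ 1) :
    Summable (fun m : ℕ => 2 * (((m:ℝ) + 3) * Real.log ((m:ℝ) + 3) ^ (1 + ε))⁻¹) := by
  set G : ℕ → ℝ := fun m => Real.log ((m:ℝ) + 3) ^ (-ε) with hG
  have hlog1 : ∀ m : ℕ, 1 ≤ Real.log ((m:ℝ) + 3) := by
    intro m
    apply log_ge_one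
    have := Nat.cast_nonneg (α := ℝ) m
    linarith
  have hGanti : ∀ m, G (m+1) ≤ G m := by
    intro m
    simp only [hG]
    rw [Real.rpow_neg (by linarith [hlog1 m, hlog1 (m+1)]), Real.rpow_neg (by linarith [hlog1 m, hlog1 (m+1)])]
    apply inv_anti₀ (Real.rpow_pos_of_pos (by linarith [hlog1 m]) ε)
    apply Real.rpow_le_rpow (by linarith [hlog1 m]) _ hε.le
    apply Real.log_le_log (by linarith [Nat.cast_nonneg (α := ℝ) m])
    push_cast
    linarith
  have hGnonneg : ∀ m, 0 ≤ G m := fun m => Real.rpow_nonneg (by linarith [hlog1 m]) _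
  have htele : Summable (fun m : ℕ => G m - G (m+1)) := by
    apply summable_of_sum_range_le (c := G 0)
    · intro m; linarith [hGanti m]
    · intro n
      rw [Finset.sum_range_sub' G n]
      linarith [hGnonneg n]
  refine Summable.of_nonneg_of_le
    (fun m => mul_nonneg (by norm_num) (inv_nonneg.2 (term_pos ε m).le)) (fun m => ?_)
    (htele.mul_left (8/ε))
  have hkey := key_compare hε hε1 (x := (m:ℝ) + 3)
    (by linarith [Nat.cast_nonneg (α := ℝ) m])
  have hc : ((m:ℝ) + 1) + 3 = ((m:ℝ) + 3) + 1 := by ring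
  simp only [hG]
  push_cast
  rw [hc]
  exact hkey

lemma summable_final (hε : 0 < ε) :
    Summable (fun m : ℕ => 2 * ((((m + 3 : ℕ)):ℝ) * Real.log ((m + 3 : ℕ):ℝ) ^ (1 + ε))⁻¹) := by
  set ε' := min ε 1 with hε'
  have hε'0 : 0 < ε' := lt_min hε one_pos
  have hε'1 : ε' ≤ 1 := min_le_right _ _
  have hε'ε : ε' ≤ ε := min_le_left _ _
  refine Summable.of_nonneg_of_le
    (fun m => by
      rw [show ((m + 3 : ℕ):ℝ) = (m:ℝ) + 3 by push_cast; ring]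
      exact mul_nonneg (by norm_num) (inv_nonneg.2 (term_pos ε m).le)) (fun m => ?_)
    (summable_tele_aux hε'0 hε'1)
  have hm3 : ((m + 3 : ℕ):ℝ) = (m:ℝ) + 3 := by push_cast; ring
  rw [hm3]
  have hlog1 : 1 ≤ Real.log ((m:ℝ) + 3) := by
    apply log_ge_one; linarith [Nat.cast_nonneg (α := ℝ) m]
  have hmono : Real.log ((m:ℝ) + 3) ^ (1 + ε') ≤ Real.log ((m:ℝ) + 3) ^ (1 + ε) :=
    Real.rpow_le_rpow_of_exponent_le hlog1 (by linarith)
  have h1 : (0:ℝ) < ((m:ℝ) + 3) * Real.log ((m:ℝ) + 3) ^ (1 + ε') := by positivity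
  apply mul_le_mul_of_nonneg_left _ (by norm_num)
  apply inv_anti₀ h1
  apply mul_le_mul_of_nonneg_left hmono (by linarith [Nat.cast_nonneg (α := ℝ) m])
end


lemma gauss_iter_irrational {x : ℝ} (h : Irrational x) : ∀ k, Irrational (gaussMap^[k] x)
  | 0 => h
  | (k+1) => by
    rw [Function.iterate_succ_apply']
    exact (gauss_iter_irrational h k).inv.sub_intCast _

lemma gauss_iter_mem_Ico {x : ℝ} (hx : x ∈ Set.Ioo (0:ℝ) 1) (k : ℕ) :
    gaussMap^[k] x ∈ Set.Ico (0:ℝ) 1 := by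
  cases k with
  | zero => exact ⟨hx.1.le, hx.2⟩
  | succ m =>
    rw [Function.iterate_succ_apply']
    exact ⟨Int.fract_nonneg _, Int.fract_lt_one _⟩

/-- For every `ε > 0`, the set
`U_ε = {x ∈ (0,1) : x` irrational and `aₙ > n·(log n)^{1+ε}` for only finitely many `n}`
has full Lebesgue measure in `(0,1)`. -/
theorem borel_bernstein_finite (ε : ℝ) (hε : 0 < ε) :
    volume ((Set.Ioo (0 : ℝ) 1) \
      {x : ℝ | Irrational x ∧
        {n : ℕ | 1 ≤ n ∧ (n : ℝ) * Real.log n ^ (1 + ε) < (partQuot x n : ℝ)}.Finite}) = 0 := by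
  set c : ℕ → ℝ := fun n => (n : ℝ) * Real.log n ^ (1 + ε) with hc
  have hc3 : ∀ n : ℕ, 3 ≤ n → 3 ≤ c n := by
    intro n hn
    have hn3 : (3:ℝ) ≤ n := by exact_mod_cast hn
    have hl : 1 ≤ Real.log n := log_ge_one hn3
    have h1 : 1 ≤ Real.log n ^ (1 + ε) := Real.one_le_rpow hl (by linarith)
    calc (3:ℝ) ≤ (n:ℝ) := hn3
      _ = (n:ℝ) * 1 := (mul_one _).symm
      _ ≤ c n := mul_le_mul_of_nonneg_left h1 (by linarith)
  set p : ℕ → ℝ → Prop :=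
    fun n x => 3 ≤ n ∧ x ∈ Set.Ioo (0:ℝ) 1 ∩ gaussMap^[n-1] ⁻¹' Set.Ioo 0 (c n)⁻¹ with hp
  have hsubn : ∀ n : ℕ, 3 ≤ n → Set.Ioo (0:ℝ) (c n)⁻¹ ⊆ Set.Ioo 0 1 := by
    intro n hn y hy
    refine ⟨hy.1, lt_of_lt_of_le hy.2 ?_⟩
    rw [inv_le_one_iff₀]; right; linarith [hc3 n hn]
  have hmeas_bound : ∀ n : ℕ,
      volume {x | p n x} ≤ ENNReal.ofReal (if 3 ≤ n then 2 * (c n)⁻¹ else 0) := by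
    intro n
    by_cases hn : 3 ≤ n
    · rw [if_pos hn]
      have hv := vol_le (n-1) (Set.Ioo 0 (c n)⁻¹) measurableSet_Ioo (hsubn n hn)
      have hset : {x | p n x} = Set.Ioo (0:ℝ) 1 ∩ gaussMap^[n-1] ⁻¹' Set.Ioo 0 (c n)⁻¹ := by
        ext z; simp [hp, hn]
      rw [hset]
      refine le_trans hv ?_
      rw [Real.volume_Ioo, sub_zero, ENNReal.ofReal_mul (by norm_num : (0:ℝ) ≤ 2)]
      gcongr
      · exact le_of_eq (by norm_num)
    · have hset : {x | p n x} = (∅ : Set ℝ) := by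
        ext z; simp [hp, hn]
      rw [hset, if_neg hn]
      simp
  have hnonneg : ∀ n : ℕ, 0 ≤ (if 3 ≤ n then 2 * (c n)⁻¹ else 0) := by
    intro n
    by_cases hn : 3 ≤ n
    · rw [if_pos hn]
      have := hc3 n hn
      positivity
    · rw [if_neg hn]
  have hfreq : volume {x : ℝ | ∃ᶠ n in atTop, p n x} = 0 := by
    apply measure_setOf_frequently_eq_zero
    have hsum : Summable (fun n : ℕ => if 3 ≤ n then 2 * (c n)⁻¹ else 0) := by
      apply (summable_nat_add_iff 3).1
      have heq : (fun n : ℕ => if 3 ≤ n + 3 then 2 * (c (n + 3))⁻¹ else 0)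
          = fun n : ℕ => 2 * ((((n + 3 : ℕ)):ℝ) * Real.log ((n + 3 : ℕ):ℝ) ^ (1 + ε))⁻¹ := by
        funext n; rw [if_pos (by omega)]
      rw [heq]
      exact summable_final hε
    apply ne_top_of_le_ne_top (b := ENNReal.ofReal
      (∑' n : ℕ, if 3 ≤ n then 2 * (c n)⁻¹ else 0)) ENNReal.ofReal_ne_top
    rw [ENNReal.ofReal_tsum_of_nonneg hnonneg hsum]
    exact ENNReal.tsum_le_tsum hmeas_bound
  have hQ : volume {x : ℝ | ¬ Irrational x} = 0 := by
    have : {x : ℝ | ¬ Irrational x} = Set.range ((↑) : ℚ → ℝ) := by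
      ext x; simp [Irrational]
    rw [this]
    exact (Set.countable_range _).measure_zero _
  apply measure_mono_null _ (measure_union_null hQ hfreq)
  rintro x ⟨hxI, hxN⟩
  by_cases hirr : Irrational x
  · right
    have hinf : {n : ℕ | 1 ≤ n ∧ c n < (partQuot x n : ℝ)}.Infinite :=
      fun hfin => hxN ⟨hirr, hfin⟩
    simp only [Set.mem_setOf_eq, Filter.frequently_atTop]
    intro N
    obtain ⟨n, hnS, hn⟩ := hinf.exists_gt (max N 2)
    have hn3 : 3 ≤ n := by
      have := le_max_right N 2; omega
    refine ⟨n, by have := le_max_left N 2; omega, hn3, hxI, ?_⟩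
    set y := gaussMap^[n-1] x with hy
    have hyirr : Irrational y := gauss_iter_irrational hirr _
    have hymem := gauss_iter_mem_Ico hxI (n-1)
    have hy0 : 0 < y := by
      rcases lt_or_eq_of_le hymem.1 with h | h
      · exact h
      · exact absurd h.symm (by simpa using hyirr.ne_int 0)
    have hcn := hc3 n hn3
    have hfl : c n < ((⌊y⁻¹⌋ : ℤ) : ℝ) := by
      have hq : partQuot x n = (⌊y⁻¹⌋).toNat := rfl
      have h2 := hnS.2
      rw [hq] at h2
      have htn : 0 ≤ ⌊y⁻¹⌋ := by
        by_contra h'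
        push_neg at h'
        rw [Int.toNat_of_nonpos h'.le] at h2
        norm_num at h2
        linarith
      have hcast : ((⌊y⁻¹⌋.toNat : ℕ) : ℝ) = ((⌊y⁻¹⌋ : ℤ) : ℝ) := by
        exact_mod_cast congrArg (Int.cast : ℤ → ℝ) (Int.toNat_of_nonneg htn)
      rwa [hcast] at h2
    have hyinv : c n < y⁻¹ := lt_of_lt_of_le hfl (Int.floor_le _)
    have : y < (c n)⁻¹ := by
      have h := inv_strictAnti₀ (show (0:ℝ) < c n by linarith) hyinv
      rwa [inv_inv] at h
    exact ⟨hy0, this⟩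
  · left; exact hirr
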